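/- For every x ≥ 0 and every ℓ ∈ (1, 2], one has e^{-x} ≤ 1 - x + x^ℓ/ℓ. -/

import Mathlib

theorem exp_neg_le_one_sub_add_rpow (x : ℝ) (hx : 0 ≤ x) (ℓ : ℝ) (hℓ1 : 1 < ℓ) (hℓ2 : ℓ ≤ 2) :
    Real.exp (-x) ≤ 1 - x + x ^ ℓ / ℓ := by
  have hℓ0 : (0:ℝ) < ℓ := lt_trans one_pos hℓ1
  set g : ℝ → ℝ := fun y => 1 - y + y ^ ℓ / ℓ - Real.exp (-y) with hg
  have hderiv : ∀ y : ℝ, HasDerivAt g (-1 + y ^ (ℓ - 1) + Real.exp (-y)) y := by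
    intro y
    have h1 : HasDerivAt (fun y : ℝ => y ^ ℓ) (ℓ * y ^ (ℓ - 1)) y :=
      Real.hasDerivAt_rpow_const (Or.inr hℓ1.le)
    have h2 : HasDerivAt (fun y : ℝ => y ^ ℓ / ℓ) (y ^ (ℓ - 1)) y := by
      have := h1.div_const ℓ
      simpa [mul_div_assoc, mul_div_cancel_left₀ _ hℓ0.ne'] using this
    have h3 : HasDerivAt (fun y : ℝ => Real.exp (-y)) (-Real.exp (-y)) y := by
      simpa [Function.comp_def] using (Real.hasDerivAt_exp (-y)).comp y (hasDerivAt_neg y)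
    have h4 : HasDerivAt (fun y : ℝ => 1 - y) (-1 : ℝ) y := by
      simpa using (hasDerivAt_id y).const_sub (1 : ℝ)
    have := (h4.add h2).sub h3
    refine this.congr_deriv ?_
    ring
  have hmono : MonotoneOn g (Set.Ici 0) := by
    apply monotoneOn_of_deriv_nonneg (convex_Ici 0)
    · exact fun y _ => (hderiv y).continuousAt.continuousWithinAt
    · intro y hy
      exact (hderiv y).differentiableAt.differentiableWithinAt
    · intro y hy
      rw [interior_Ici] at hy
      rw [(hderiv y).deriv]
      rcases le_or_gt y 1 with h1 | h1
      · have hpow : y ≤ y ^ (ℓ - 1) := by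
          calc y = y ^ (1:ℝ) := (Real.rpow_one y).symm
          _ ≤ y ^ (ℓ - 1) := Real.rpow_le_rpow_of_exponent_ge hy h1 (by linarith)
        have hexp : 1 - y ≤ Real.exp (-y) := by
          have := Real.add_one_le_exp (-y); linarith
        linarith
      · have hpow : (1:ℝ) ≤ y ^ (ℓ - 1) :=
          Real.one_le_rpow h1.le (by linarith)
        have := Real.exp_pos (-y)
        linarith
  have h0 : g 0 = 0 := by
    simp [hg, Real.zero_rpow hℓ0.ne']
  have := hmono (Set.self_mem_Ici) (Set.mem_Ici.mpr hx) hx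
  rw [h0] at this
  simp only [hg] at this
  linarith
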